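/- arXiv:1202.0750 — 5 statements merged into one kernel-verified Lean document; each statement's English description precedes it below -/
import Mathlib

section
/- Every induced subcomplex of a simplicial forest is a simplicial forest. In particular, every induced subcomplex of a simplicial tree is a simplicial forest. -/
noncomputable section
attribute [local instance] Classical.propDecidable

/-- The simplicial complex generated by a set of faces: all nonempty subsets. -/
def gen {V : Type} (S : Finset (Finset V)) : Finset (Finset V) :=
  S.biUnion fun F => F.powerset.filter (· ≠ ∅)

/-- The facets (maximal faces) of a complex given by its finite set of faces. -/
def facets {V : Type} (Δ : Finset (Finset V)) : Finset (Finset V) :=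
  Δ.filter fun F => ∀ G ∈ Δ, F ⊆ G → F = G

/-- A (finite, abstract) simplicial complex: nonempty faces, closed under nonempty subsets. -/
def IsComplex {V : Type} (Δ : Finset (Finset V)) : Prop :=
  ∅ ∉ Δ ∧ ∀ F ∈ Δ, ∀ G, G ⊆ F → G ≠ ∅ → G ∈ Δ

/-- `F` is a leaf of `Δ`: `F` is a facet which is either the only facet, or
there is another facet `G` (a joint) with `F ∩ (Δ ∖ F) ⊆ G`, i.e. the
intersection of `F` with any other facet is contained in `G`. -/
def IsLeaf {V : Type} (Δ : Finset (Finset V)) (F : Finset V) : Prop :=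
  F ∈ facets Δ ∧ (facets Δ = {F} ∨
    ∃ G ∈ facets Δ, G ≠ F ∧ ∀ H ∈ facets Δ, H ≠ F → F ∩ H ⊆ G)

def HasLeaf {V : Type} (Δ : Finset (Finset V)) : Prop := ∃ F, IsLeaf Δ F

/-- A forest: every nonempty subcollection (complex generated by a subset of the
facets) has a leaf. -/
def IsForest {V : Type} (Δ : Finset (Finset V)) : Prop :=
  ∀ S ⊆ facets Δ, S.Nonempty → HasLeaf (gen S)

/-- Vertex set of a complex. -/
def vtx {V : Type} (Δ : Finset (Finset V)) : Finset V := Δ.sup id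

/-- Connectedness: nonempty, and any two vertices are joined by a chain of faces. -/
def Conn {V : Type} (Δ : Finset (Finset V)) : Prop :=
  Δ.Nonempty ∧ ∀ u ∈ vtx Δ, ∀ v ∈ vtx Δ,
    Relation.ReflTransGen (fun a b => ∃ σ ∈ Δ, a ∈ σ ∧ b ∈ σ) u v

/-- A simplicial tree is a connected forest. -/
def IsTree {V : Type} (Δ : Finset (Finset V)) : Prop := Conn Δ ∧ IsForest Δ

/-- The induced subcomplex of `Δ` on a vertex set `X`: all faces contained in `X`. -/
def induced {V : Type} (Δ : Finset (Finset V)) (X : Finset V) : Finset (Finset V) :=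
  Δ.filter (· ⊆ X)

lemma mem_gen {V : Type} {S : Finset (Finset V)} {A : Finset V} :
    A ∈ gen S ↔ ∃ F ∈ S, A ⊆ F ∧ A ≠ ∅ := by
  simp [gen, Finset.mem_biUnion, Finset.mem_filter, Finset.mem_powerset]

lemma facets_gen {V : Type} {S : Finset (Finset V)}
    (hne : ∀ F ∈ S, F ≠ ∅) (hanti : ∀ F ∈ S, ∀ G ∈ S, F ⊆ G → F = G) :
    facets (gen S) = S := by
  ext A
  simp only [facets, Finset.mem_filter]
  constructor
  · rintro ⟨hA, hmax⟩
    obtain ⟨F, hF, hAF, -⟩ := mem_gen.1 hA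
    have : A = F := hmax F (mem_gen.2 ⟨F, hF, subset_rfl, hne F hF⟩) hAF
    subst this; exact hF
  · intro hA
    refine ⟨mem_gen.2 ⟨A, hA, subset_rfl, hne A hA⟩, ?_⟩
    intro G hG hAG
    obtain ⟨F, hF, hGF, -⟩ := mem_gen.1 hG
    have := hanti A hA F hF (hAG.trans hGF)
    subst this
    exact subset_antisymm hAG hGF

lemma exists_facet {V : Type} {Δ : Finset (Finset V)} {F : Finset V} (hF : F ∈ Δ) :
    ∃ G ∈ facets Δ, F ⊆ G := by
  obtain ⟨G, hG, hmax⟩ : ∃ G ∈ Δ.filter (F ⊆ ·), ∀ x ∈ Δ.filter (F ⊆ ·), ¬ G < x := by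
    obtain ⟨G, hG⟩ := Finset.exists_maximal (s := Δ.filter (F ⊆ ·)) ⟨F, by simp [hF]⟩
    exact ⟨G, hG.1, fun x hx hlt => hlt.not_ge (hG.2 hx hlt.le)⟩
  simp only [Finset.mem_filter] at hG
  refine ⟨G, ?_, hG.2⟩
  simp only [facets, Finset.mem_filter]
  refine ⟨hG.1, fun H hH hGH => ?_⟩
  by_contra hne
  exact hmax H (Finset.mem_filter.2 ⟨hH, hG.2.trans hGH⟩) (lt_of_le_of_ne hGH hne)

lemma facets_subset {V : Type} {Δ : Finset (Finset V)} : facets Δ ⊆ Δ :=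
  Finset.filter_subset _ _

lemma facets_anti {V : Type} {Δ : Finset (Finset V)} {F G : Finset V}
    (hF : F ∈ facets Δ) (hG : G ∈ facets Δ) (h : F ⊆ G) : F = G := by
  simp only [facets, Finset.mem_filter] at hF hG
  exact hF.2 G hG.1 h

/-- Every induced subcomplex of a simplicial forest is a simplicial
forest; in particular, every induced subcomplex of a simplicial tree is a forest. -/
theorem induced_subcomplex_of_forest_isForest {V : Type} (Δ : Finset (Finset V))
    (hΔ : IsComplex Δ) (X : Finset V) :
    (IsForest Δ → IsForest (induced Δ X)) ∧
    (IsTree Δ → IsForest (induced Δ X)) := by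
  have main : IsForest Δ → IsForest (induced Δ X) := by
    intro hforest S hS hSne
    -- every facet of the induced complex is G ∩ X for some facet G of Δ
    have hmemΔ : ∀ F ∈ S, F ∈ Δ ∧ F ⊆ X := by
      intro F hF
      have := facets_subset (hS hF)
      simpa [induced, Finset.mem_filter] using this
    have hFne : ∀ F ∈ S, F ≠ ∅ := fun F hF h => hΔ.1 (h ▸ (hmemΔ F hF).1)
    have hext : ∀ F : Finset V, ∃ G, F ∈ S → G ∈ facets Δ ∧ F = G ∩ X := by
      intro F
      by_cases hF : F ∈ S
      · obtain ⟨hFΔ, hFX⟩ := hmemΔ F hF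
        obtain ⟨G, hG, hFG⟩ := exists_facet hFΔ
        refine ⟨G, fun _ => ⟨hG, ?_⟩⟩
        have hGXmem : G ∩ X ∈ induced Δ X := by
          have hne : G ∩ X ≠ ∅ := by
            intro h
            exact hFne F hF (Finset.subset_empty.1
              (h ▸ Finset.subset_inter hFG hFX))
          have : G ∩ X ∈ Δ :=
            hΔ.2 G (facets_subset hG) (G ∩ X) Finset.inter_subset_left hne
          simp [induced, Finset.mem_filter, this, Finset.inter_subset_right]
        have hFfac := hS hF
        simp only [facets, Finset.mem_filter] at hFfac
        exact hFfac.2 (G ∩ X) hGXmem (Finset.subset_inter hFG hFX)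
      · exact ⟨∅, fun h => absurd h hF⟩
    choose g hg using hext
    have hginj : ∀ F ∈ S, ∀ F' ∈ S, g F = g F' → F = F' := by
      intro F hF F' hF' h
      rw [(hg F hF).2, (hg F' hF').2, h]
    set T : Finset (Finset V) := S.image g with hT
    have hTsub : T ⊆ facets Δ := by
      intro G hG
      obtain ⟨F, hF, rfl⟩ := Finset.mem_image.1 hG
      exact (hg F hF).1
    have hTne : T.Nonempty := hSne.image g
    obtain ⟨L, hLfac, hLalt⟩ := hforest T hTsub hTne
    have hTanti : ∀ F ∈ T, ∀ G ∈ T, F ⊆ G → F = G :=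
      fun F hF G hG h => facets_anti (hTsub hF) (hTsub hG) h
    have hTgennonempty : ∀ F ∈ T, F ≠ ∅ := fun F hF h => hΔ.1 (h ▸ facets_subset (hTsub hF))
    have hfgT : facets (gen T) = T := facets_gen hTgennonempty hTanti
    have hSanti : ∀ F ∈ S, ∀ G ∈ S, F ⊆ G → F = G :=
      fun F hF G hG h => facets_anti (hS hF) (hS hG) h
    have hfgS : facets (gen S) = S := facets_gen hFne hSanti
    rw [hfgT] at hLfac hLalt
    obtain ⟨F₀, hF₀, rfl⟩ := Finset.mem_image.1 hLfac
    refine ⟨F₀, ?_, ?_⟩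
    · rw [hfgS]; exact hF₀
    rcases hLalt with hsing | ⟨G', hG'T, hG'ne, hjoint⟩
    · left
      rw [hfgS]
      apply Finset.eq_singleton_iff_unique_mem.2
      refine ⟨hF₀, fun F hF => ?_⟩
      have : g F ∈ T := Finset.mem_image_of_mem g hF
      rw [hsing, Finset.mem_singleton] at this
      exact hginj F hF F₀ hF₀ this
    · right
      obtain ⟨F', hF', rfl⟩ := Finset.mem_image.1 hG'T
      refine ⟨F', by rw [hfgS]; exact hF', fun h => hG'ne (by rw [h]), ?_⟩
      intro H hH hHne
      rw [hfgS] at hH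
      have hgH : g H ∈ T := Finset.mem_image_of_mem g hH
      have hgHne : g H ≠ g F₀ := fun h => hHne (hginj H hH F₀ hF₀ h)
      have hsub : g F₀ ∩ g H ⊆ g F' := hjoint (g H) hgH hgHne
      rw [(hg F₀ hF₀).2, (hg H hH).2, (hg F' hF').2]
      intro a ha
      simp only [Finset.mem_inter] at ha ⊢
      exact ⟨hsub (Finset.mem_inter.2 ⟨ha.1.1, ha.2.1⟩), ha.1.2⟩
  exact ⟨main, fun ht => main ht.2⟩
end
end

section
/- Every simplicial forest is acyclic in all positive homological degrees; i.e., for a simplicial forest Δ, the reduced homology groups H̃_i(Δ) vanish for all i ≥ 1 (the only possibly nonzero reduced homology is H̃_0, accounting for disconnectedness). -/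
set_option maxHeartbeats 1000000


noncomputable section
attribute [local instance] Classical.propDecidable

/-- The group of reduced simplicial `(n-1)`-chains over `ℤ`: the free `ℤ`-module on
the faces of `Δ` of cardinality `n` (with the empty face included in degree `0`). -/
abbrev RChain {V : Type} (Δ : Finset (Finset V)) (n : ℕ) :=
  {F : Finset V // (F ∈ Δ ∨ F = ∅) ∧ F.card = n} →₀ ℤ

/-- The simplicial boundary map of the (augmented) reduced chain complex of `Δ`. -/
noncomputable def bd {V : Type} [LinearOrder V] (Δ : Finset (Finset V)) (n : ℕ) :
    RChain Δ (n + 1) →ₗ[ℤ] RChain Δ n :=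
  Finsupp.lsum ℤ fun F => LinearMap.toSpanSingleton ℤ (RChain Δ n)
    (∑ x ∈ F.1.attach,
      if h : ((F.1.erase x.1 ∈ Δ ∨ F.1.erase x.1 = ∅) ∧ (F.1.erase x.1).card = n) then
        ((-1 : ℤ) ^ ((F.1.filter (· < x.1)).card)) • Finsupp.single ⟨F.1.erase x.1, h⟩ 1
      else 0)

namespace Forest
set_option linter.unusedSectionVars false

variable {V : Type} [LinearOrder V]

/-- sign -/
def sgn (σ : Finset V) (x : V) : ℤ := (-1) ^ (σ.filter (· < x)).card

/-- chain condition -/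
abbrev cnd {V : Type} (Δ : Finset (Finset V)) (n : ℕ) (τ : Finset V) : Prop :=
  (τ ∈ Δ ∨ τ = ∅) ∧ τ.card = n

/-- basis chain, or zero if not a face -/
def esingle (Δ : Finset (Finset V)) (n : ℕ) (τ : Finset V) : RChain Δ n :=
  if h : cnd Δ n τ then Finsupp.single ⟨τ, h⟩ 1 else 0

lemma sgn_erase (σ : Finset V) {x : V} (y : V) (hx : x ∈ σ) :
    sgn (σ.erase x) y = sgn σ y * (if x < y then -1 else 1) := by
  unfold sgn
  rw [Finset.filter_erase]
  by_cases h : x < y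
  · have hxm : x ∈ σ.filter (· < y) := Finset.mem_filter.2 ⟨hx, h⟩
    rw [if_pos h, Finset.card_erase_of_mem hxm]
    have : (σ.filter (· < y)).card ≠ 0 := Finset.card_ne_zero_of_mem hxm
    obtain ⟨k, hk⟩ : ∃ k, (σ.filter (· < y)).card = k + 1 := ⟨_, (Nat.succ_pred_eq_of_ne_zero this).symm⟩
    rw [hk, Nat.add_sub_cancel, pow_succ]; ring
  · have he : (σ.filter (· < y)).erase x = σ.filter (· < y) :=
      Finset.erase_eq_of_notMem (fun hm => h (Finset.mem_filter.1 hm).2)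
    rw [if_neg h, he]; ring

lemma sgn_insert (σ : Finset V) {w : V} (y : V) (hw : w ∉ σ) :
    sgn (insert w σ) y = sgn σ y * (if w < y then -1 else 1) := by
  unfold sgn
  rw [Finset.filter_insert]
  by_cases h : w < y
  · rw [if_pos h, if_pos h, Finset.card_insert_of_notMem (fun hm => hw (Finset.mem_filter.1 hm).1)]
    rw [pow_succ]
  · rw [if_neg h, if_neg h]; ring

lemma sgn_mul_self (σ : Finset V) (x : V) : sgn σ x * sgn σ x = 1 := by
  unfold sgn; rw [← pow_add]; exact Even.neg_one_pow ⟨_, rfl⟩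

lemma sgn_erase_self (σ : Finset V) (x : V) : sgn (σ.erase x) x = sgn σ x := by
  unfold sgn
  rw [Finset.filter_erase, Finset.erase_eq_of_notMem]
  intro hm; exact absurd (Finset.mem_filter.1 hm).2 (lt_irrefl x)

lemma sgn_insert_self (σ : Finset V) (w : V) : sgn (insert w σ) w = sgn σ w := by
  unfold sgn
  rw [Finset.filter_insert, if_neg (lt_irrefl w)]

/-- cancellation for ∂∂ = 0 -/
lemma sgn_cancel_pair (σ : Finset V) {x y : V} (hx : x ∈ σ) (hy : y ∈ σ) (hne : x ≠ y) :
    sgn σ x * sgn (σ.erase x) y + sgn σ y * sgn (σ.erase y) x = 0 := by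
  rw [sgn_erase σ y hx, sgn_erase σ x hy]
  rcases lt_or_gt_of_ne hne with h | h
  · rw [if_pos h, if_neg (not_lt_of_gt h)]; ring
  · rw [if_neg (not_lt_of_gt h), if_pos h]; ring

/-- cancellation for the cone homotopy -/
lemma sgn_cancel_cone (σ : Finset V) {w x : V} (hw : w ∉ σ) (hx : x ∈ σ) :
    sgn σ w * sgn (insert w σ) x + sgn σ x * sgn (σ.erase x) w = 0 := by
  have hne : x ≠ w := fun h => hw (h ▸ hx)
  rw [sgn_insert σ x hw, sgn_erase σ w hx]
  rcases lt_or_gt_of_ne hne with h | h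
  · rw [if_pos h, if_neg (not_lt_of_gt h)]; ring
  · rw [if_neg (not_lt_of_gt h), if_pos h]; ring


variable {Δ : Finset (Finset V)} {n : ℕ} {w : V}

lemma esingle_of_cnd {τ : Finset V} (h : cnd Δ n τ) :
    esingle Δ n τ = Finsupp.single ⟨τ, h⟩ 1 := dif_pos h

lemma esingle_of_not_cnd {τ : Finset V} (h : ¬ cnd Δ n τ) : esingle Δ n τ = 0 := dif_neg h

lemma subtype_mem (σ : {F : Finset V // (F ∈ Δ ∨ F = ∅) ∧ F.card = n + 1}) :
    σ.1 ∈ Δ ∧ σ.1 ≠ ∅ := by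
  have hne : σ.1 ≠ ∅ := by
    intro h
    have := σ.2.2
    rw [h, Finset.card_empty] at this
    omega
  exact ⟨σ.2.1.resolve_right hne, hne⟩

lemma bd_single (σ : {F : Finset V // (F ∈ Δ ∨ F = ∅) ∧ F.card = n + 1}) :
    bd Δ n (Finsupp.single σ 1) = ∑ x ∈ σ.1, sgn σ.1 x • esingle Δ n (σ.1.erase x) := by
  unfold bd
  rw [Finsupp.lsum_single, LinearMap.toSpanSingleton_apply, one_smul]
  rw [← Finset.sum_attach σ.1 (fun x => sgn σ.1 x • esingle Δ n (σ.1.erase x))]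
  refine Finset.sum_congr rfl fun x _ => ?_
  unfold esingle sgn
  split
  · rfl
  · exact (smul_zero _).symm

lemma bd_esingle (hτ : τ ∈ Δ) (hcard : τ.card = n + 1) :
    bd Δ n (esingle Δ (n + 1) τ) = ∑ x ∈ τ, sgn τ x • esingle Δ n (τ.erase x) := by
  rw [esingle_of_cnd ⟨Or.inl hτ, hcard⟩]
  exact bd_single ⟨τ, Or.inl hτ, hcard⟩

/-- the cone (join with apex w) operator -/
def cone (Δ : Finset (Finset V)) (w : V) (n : ℕ) : RChain Δ n →ₗ[ℤ] RChain Δ (n + 1) :=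
  Finsupp.lsum ℤ fun σ => LinearMap.toSpanSingleton ℤ (RChain Δ (n + 1))
    (if w ∈ σ.1 then 0 else sgn σ.1 w • esingle Δ (n + 1) (insert w σ.1))

lemma cone_single (σ : {F : Finset V // (F ∈ Δ ∨ F = ∅) ∧ F.card = n}) :
    cone Δ w n (Finsupp.single σ 1)
      = if w ∈ σ.1 then 0 else sgn σ.1 w • esingle Δ (n + 1) (insert w σ.1) := by
  unfold cone
  rw [Finsupp.lsum_single, LinearMap.toSpanSingleton_apply, one_smul]

lemma cone_esingle (hΔ : IsComplex Δ) (τ : Finset V) :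
    cone Δ w n (esingle Δ n τ)
      = if w ∈ τ then 0 else sgn τ w • esingle Δ (n + 1) (insert w τ) := by
  by_cases h : cnd Δ n τ
  · rw [esingle_of_cnd h, cone_single]
  · rw [esingle_of_not_cnd h, map_zero]
    by_cases hw : w ∈ τ
    · rw [if_pos hw]
    · rw [if_neg hw]
      have hins : ¬ cnd Δ (n + 1) (insert w τ) := by
        rintro ⟨hmem, hcard⟩
        apply h
        constructor
        · rcases hmem with hmem | habs
          · by_cases hτ0 : τ = ∅
            · exact Or.inr hτ0
            · exact Or.inl (hΔ.2 _ hmem τ (Finset.subset_insert w τ) hτ0)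
          · exact absurd habs (Finset.insert_ne_empty w τ)
        · rw [Finset.card_insert_of_notMem hw] at hcard
          omega
      rw [esingle_of_not_cnd hins, smul_zero]

lemma homotopy_single (hΔ : IsComplex Δ) {F : Finset V} (hFΔ : F ∈ Δ) (hw : w ∈ F)
    (σ : {F : Finset V // (F ∈ Δ ∨ F = ∅) ∧ F.card = n + 1}) (hσF : σ.1 ⊆ F) :
    bd Δ (n + 1) (cone Δ w (n + 1) (Finsupp.single σ 1))
      + cone Δ w n (bd Δ n (Finsupp.single σ 1)) = Finsupp.single σ 1 := by
  have hσcard := σ.2.2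
  rw [cone_single, bd_single, map_sum]
  have hconeterm : ∀ x ∈ σ.1, cone Δ w n (sgn σ.1 x • esingle Δ n (σ.1.erase x))
      = sgn σ.1 x • (if w ∈ σ.1.erase x then 0
          else sgn (σ.1.erase x) w • esingle Δ (n + 1) (insert w (σ.1.erase x))) := by
    intro x _
    rw [map_smul, cone_esingle hΔ]
  rw [Finset.sum_congr rfl hconeterm]
  by_cases hwσ : w ∈ σ.1
  · rw [if_pos hwσ, map_zero, zero_add]
    have hterm : ∀ x ∈ σ.1, (sgn σ.1 x • (if w ∈ σ.1.erase x then 0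
        else sgn (σ.1.erase x) w • esingle Δ (n + 1) (insert w (σ.1.erase x))))
        = if x = w then Finsupp.single σ 1 else 0 := by
      intro x hx
      by_cases hxw : x = w
      · subst hxw
        rw [if_neg (Finset.notMem_erase x σ.1), if_pos rfl,
          Finset.insert_erase hwσ, esingle_of_cnd σ.2, sgn_erase_self,
          smul_smul, sgn_mul_self, one_smul]
      · rw [if_pos (Finset.mem_erase.2 ⟨fun h => hxw h.symm, hwσ⟩), smul_zero, if_neg hxw]
    rw [Finset.sum_congr rfl hterm, Finset.sum_ite_eq' σ.1 w (fun _ => Finsupp.single σ 1),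
      if_pos hwσ]
  · rw [if_neg hwσ, map_smul]
    have hinsΔ : insert w σ.1 ∈ Δ :=
      hΔ.2 F hFΔ _ (Finset.insert_subset hw hσF) (Finset.insert_ne_empty w σ.1)
    have hinscard : (insert w σ.1).card = (n + 1) + 1 := by
      rw [Finset.card_insert_of_notMem hwσ, hσcard]
    rw [bd_esingle hinsΔ hinscard, Finset.sum_insert hwσ, Finset.erase_insert hwσ,
      sgn_insert_self, esingle_of_cnd σ.2, smul_add, smul_smul, sgn_mul_self, one_smul]
    have hz : sgn σ.1 w • ∑ x ∈ σ.1, sgn (insert w σ.1) x •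
          esingle Δ (n + 1) ((insert w σ.1).erase x)
        + ∑ x ∈ σ.1, (sgn σ.1 x • (if w ∈ σ.1.erase x then 0
            else sgn (σ.1.erase x) w • esingle Δ (n + 1) (insert w (σ.1.erase x)))) = 0 := by
      rw [Finset.smul_sum, ← Finset.sum_add_distrib]
      refine Finset.sum_eq_zero fun x hx => ?_
      have hxw : w ≠ x := fun h => hwσ (h ▸ hx)
      rw [if_neg (fun h => hwσ (Finset.mem_of_mem_erase h)),
        Finset.erase_insert_of_ne hxw, smul_smul, smul_smul, ← add_smul,
        sgn_cancel_cone σ.1 hwσ hx, zero_smul]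
    rw [add_assoc, hz, add_zero]

lemma rep {α : Type*} (c : α →₀ ℤ) : c = ∑ σ ∈ c.support, c σ • Finsupp.single σ 1 := by
  conv_lhs => rw [← Finsupp.sum_single c]
  rw [Finsupp.sum]
  exact Finset.sum_congr rfl fun σ _ => by rw [Finsupp.smul_single', mul_one]

lemma homotopy (hΔ : IsComplex Δ) {F : Finset V} (hFΔ : F ∈ Δ) (hw : w ∈ F)
    (c : RChain Δ (n + 1)) (hc : ∀ σ ∈ c.support, σ.1 ⊆ F) :
    bd Δ (n + 1) (cone Δ w (n + 1) c) + cone Δ w n (bd Δ n c) = c := by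
  conv_lhs => rw [rep c]
  rw [map_sum, map_sum, map_sum, map_sum, ← Finset.sum_add_distrib]
  conv_rhs => rw [rep c]
  refine Finset.sum_congr rfl fun σ hσ => ?_
  rw [map_smul, map_smul, map_smul, map_smul, ← smul_add,
    homotopy_single hΔ hFΔ hw σ (hc σ hσ)]

lemma bd_bd_single (hΔ : IsComplex Δ)
    (σ : {F : Finset V // (F ∈ Δ ∨ F = ∅) ∧ F.card = n + 1 + 1}) :
    bd Δ n (bd Δ (n + 1) (Finsupp.single σ 1)) = 0 := by
  have hσΔ := (subtype_mem σ).1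
  rw [bd_single, map_sum]
  have hterm : ∀ x ∈ σ.1, bd Δ n (sgn σ.1 x • esingle Δ (n + 1) (σ.1.erase x))
      = ∑ y ∈ σ.1.erase x, (sgn σ.1 x * sgn (σ.1.erase x) y) •
          esingle Δ n ((σ.1.erase x).erase y) := by
    intro x hx
    have hmem : σ.1.erase x ∈ Δ := by
      refine hΔ.2 σ.1 hσΔ _ (Finset.erase_subset x σ.1) ?_
      have : (σ.1.erase x).card = n + 1 := by
        rw [Finset.card_erase_of_mem hx, σ.2.2]
        omega
      intro h0; rw [h0, Finset.card_empty] at this; omega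
    have hcard : (σ.1.erase x).card = n + 1 := by
      rw [Finset.card_erase_of_mem hx, σ.2.2]
      omega
    rw [map_smul, bd_esingle hmem hcard, Finset.smul_sum]
    exact Finset.sum_congr rfl fun y _ => by rw [smul_smul]
  rw [Finset.sum_congr rfl hterm]
  have hconv : ∀ x ∈ σ.1, ∑ y ∈ σ.1.erase x, (sgn σ.1 x * sgn (σ.1.erase x) y) •
        esingle Δ n ((σ.1.erase x).erase y)
      = ∑ y ∈ σ.1, if y ≠ x then (sgn σ.1 x * sgn (σ.1.erase x) y) •
          esingle Δ n ((σ.1.erase x).erase y) else 0 := by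
    intro x _
    rw [Finset.sum_ite, Finset.sum_const_zero, add_zero, Finset.filter_ne' σ.1 x]
  rw [Finset.sum_congr rfl hconv, ← Finset.sum_product']
  refine Finset.sum_involution (fun p _ => (p.2, p.1)) ?_ ?_ ?_ ?_
  · rintro ⟨x, y⟩ hp
    simp only [Finset.mem_product] at hp
    by_cases hne : y ≠ x
    · rw [if_pos hne, if_pos (Ne.symm hne)]
      rw [Finset.erase_right_comm (a := x) (b := y), ← add_smul,
        sgn_cancel_pair σ.1 hp.1 hp.2 (Ne.symm hne), zero_smul]
    · rw [if_neg hne, if_neg (fun h : x ≠ y => hne (Ne.symm h)), add_zero]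
  · rintro ⟨x, y⟩ hp hne
    intro hEq
    apply hne
    have hyx : y = x := (Prod.ext_iff.1 hEq).1
    rw [if_neg (fun h => h hyx)]
  · rintro ⟨x, y⟩ hp
    simp only [Finset.mem_product] at hp ⊢
    exact ⟨hp.2, hp.1⟩
  · rintro ⟨x, y⟩ _
    rfl

lemma bd_bd (hΔ : IsComplex Δ) (c : RChain Δ (n + 1 + 1)) :
    bd Δ n (bd Δ (n + 1) c) = 0 := by
  induction c using Finsupp.induction_linear with
  | zero => rw [map_zero, map_zero]
  | add f g hf hg => rw [map_add, map_add, hf, hg, add_zero]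
  | single a b =>
    have : Finsupp.single a b = b • Finsupp.single a 1 := by
      rw [Finsupp.smul_single', mul_one]
    rw [this, map_smul, map_smul, bd_bd_single hΔ, smul_zero]

lemma esingle_apply_ne {ρ : Finset V} {τ : {F : Finset V // (F ∈ Δ ∨ F = ∅) ∧ F.card = n}}
    (h : esingle Δ n ρ τ ≠ 0) : τ.1 = ρ := by
  unfold esingle at h
  split at h
  · by_contra hne
    exact h (Finsupp.single_eq_of_ne' fun hEq => hne (by rw [← hEq]))
  · exact absurd rfl h

lemma support_bd {c : RChain Δ (n + 1)} {τ : {F : Finset V // (F ∈ Δ ∨ F = ∅) ∧ F.card = n}}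
    (hτ : τ ∈ (bd Δ n c).support) : ∃ σ ∈ c.support, τ.1 ⊆ σ.1 := by
  rw [Finsupp.mem_support_iff] at hτ
  have h1 : bd Δ n c = ∑ σ ∈ c.support, c σ • bd Δ n (Finsupp.single σ 1) := by
    conv_lhs => rw [rep c]
    rw [map_sum]
    exact Finset.sum_congr rfl fun σ _ => map_smul _ _ _
  rw [h1, Finsupp.finset_sum_apply] at hτ
  obtain ⟨σ, hσ, hne⟩ := Finset.exists_ne_zero_of_sum_ne_zero hτ
  refine ⟨σ, hσ, ?_⟩
  rw [Finsupp.smul_apply] at hne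
  have hbd : (bd Δ n (Finsupp.single σ 1)) τ ≠ 0 := fun h => hne (by rw [h, smul_zero])
  rw [bd_single, Finsupp.finset_sum_apply] at hbd
  obtain ⟨x, hx, hne2⟩ := Finset.exists_ne_zero_of_sum_ne_zero hbd
  rw [Finsupp.smul_apply] at hne2
  have h3 : (esingle Δ n (σ.1.erase x)) τ ≠ 0 := fun h => hne2 (by rw [h, smul_zero])
  rw [esingle_apply_ne h3]
  exact Finset.erase_subset x σ.1

lemma support_cone {c : RChain Δ n} {τ : {F : Finset V // (F ∈ Δ ∨ F = ∅) ∧ F.card = n + 1}}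
    (hτ : τ ∈ (cone Δ w n c).support) : ∃ σ ∈ c.support, w ∉ σ.1 ∧ τ.1 = insert w σ.1 := by
  rw [Finsupp.mem_support_iff] at hτ
  have h1 : cone Δ w n c = ∑ σ ∈ c.support, c σ • cone Δ w n (Finsupp.single σ 1) := by
    conv_lhs => rw [rep c]
    rw [map_sum]
    exact Finset.sum_congr rfl fun σ _ => map_smul _ _ _
  rw [h1, Finsupp.finset_sum_apply] at hτ
  obtain ⟨σ, hσ, hne⟩ := Finset.exists_ne_zero_of_sum_ne_zero hτ
  refine ⟨σ, hσ, ?_⟩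
  rw [Finsupp.smul_apply] at hne
  have hc : (cone Δ w n (Finsupp.single σ 1)) τ ≠ 0 := fun h => hne (by rw [h, smul_zero])
  rw [cone_single] at hc
  by_cases hw : w ∈ σ.1
  · rw [if_pos hw] at hc
    exact absurd rfl hc
  · rw [if_neg hw, Finsupp.smul_apply] at hc
    have h3 : (esingle Δ (n + 1) (insert w σ.1)) τ ≠ 0 := fun h => hc (by rw [h, smul_zero])
    exact ⟨hw, esingle_apply_ne h3⟩

lemma joint_mem {W : Type} {F H G : Finset W} (hj : F ∩ H ⊆ G) {a : W}
    (haF : a ∈ F) (haH : a ∈ H) : a ∈ G :=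
  hj (Finset.mem_inter.2 ⟨haF, haH⟩)

lemma mem_gen {S : Finset (Finset V)} {A : Finset V} :
    A ∈ gen S ↔ ∃ F ∈ S, A ⊆ F ∧ A ≠ ∅ := by
  unfold gen
  simp only [Finset.mem_biUnion, Finset.mem_filter, Finset.mem_powerset]

lemma facets_antichain (hΔ : IsComplex Δ) {A B : Finset V}
    (hA : A ∈ facets Δ) (hB : B ∈ facets Δ) (hAB : A ⊆ B) : A = B := by
  rw [facets, Finset.mem_filter] at hA hB
  exact hA.2 B hB.1 hAB

lemma facets_nonempty (hΔ : IsComplex Δ) {A : Finset V} (hA : A ∈ facets Δ) : A ≠ ∅ := by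
  rw [facets, Finset.mem_filter] at hA
  exact fun h => hΔ.1 (h ▸ hA.1)

lemma facets_gen (hΔ : IsComplex Δ) {S : Finset (Finset V)} (hS : S ⊆ facets Δ) :
    facets (gen S) = S := by
  ext A
  rw [facets, Finset.mem_filter]
  constructor
  · rintro ⟨hAg, hmax⟩
    rw [mem_gen] at hAg
    obtain ⟨F, hFS, hAF, hAne⟩ := hAg
    have hFg : F ∈ gen S := mem_gen.2 ⟨F, hFS, Finset.Subset.refl F, facets_nonempty hΔ (hS hFS)⟩
    rw [hmax F hFg hAF]
    exact hFS
  · intro hAS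
    have hAne := facets_nonempty hΔ (hS hAS)
    refine ⟨mem_gen.2 ⟨A, hAS, Finset.Subset.refl A, hAne⟩, ?_⟩
    intro G hG hAG
    rw [mem_gen] at hG
    obtain ⟨F', hF'S, hGF', _⟩ := hG
    have hAF' : A = F' := facets_antichain hΔ (hS hAS) (hS hF'S) (hAG.trans hGF')
    exact Finset.Subset.antisymm hAG (hAF' ▸ hGF')

lemma gen_facets (hΔ : IsComplex Δ) : gen (facets Δ) = Δ := by
  ext A
  rw [mem_gen]
  constructor
  · rintro ⟨F, hF, hAF, hAne⟩
    rw [facets, Finset.mem_filter] at hF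
    exact hΔ.2 F hF.1 A hAF hAne
  · intro hA
    have hAne : A ≠ ∅ := fun h => hΔ.1 (h ▸ hA)
    have hTne : (Δ.filter (A ⊆ ·)).Nonempty := ⟨A, Finset.mem_filter.2 ⟨hA, Finset.Subset.refl A⟩⟩
    obtain ⟨B, hBT, hBmax⟩ := Finset.exists_max_image (Δ.filter (A ⊆ ·)) Finset.card hTne
    rw [Finset.mem_filter] at hBT
    refine ⟨B, ?_, hBT.2, hAne⟩
    rw [facets, Finset.mem_filter]
    refine ⟨hBT.1, fun G hG hBG => ?_⟩
    have hGT : G ∈ Δ.filter (A ⊆ ·) := Finset.mem_filter.2 ⟨hG, hBT.2.trans hBG⟩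
    exact Finset.eq_of_subset_of_card_le hBG (hBmax G hGT)

lemma key (hΔ : IsComplex Δ) (hFor : IsForest Δ) :
    ∀ (m : ℕ) (S : Finset (Finset V)), S.card ≤ m → S ⊆ facets Δ →
    ∀ (j : ℕ) (c : RChain Δ (j + 1 + 1)), (∀ σ ∈ c.support, σ.1 ∈ gen S) →
      bd Δ (j + 1) c = 0 → ∃ b, bd Δ (j + 1 + 1) b = c := by
  intro m
  induction m with
  | zero =>
    intro S hcard hS j c hsupp _
    have hS0 : S = ∅ := Finset.card_eq_zero.1 (Nat.le_zero.1 hcard)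
    have hc0 : c = 0 := by
      by_contra hne
      obtain ⟨σ, hσ⟩ := Finsupp.support_nonempty_iff.2 hne
      have := hsupp σ hσ
      rw [hS0, mem_gen] at this
      obtain ⟨F, hF, _⟩ := this
      exact absurd hF (Finset.notMem_empty F)
    exact ⟨0, by rw [map_zero, hc0]⟩
  | succ m ih =>
    intro S hcard hS j c hsupp hcyc
    by_cases hSne : S.Nonempty
    case neg =>
      have hS0 : S = ∅ := Finset.not_nonempty_iff_eq_empty.1 hSne
      exact ih S (by rw [hS0]; simp) hS j c hsupp hcyc
    obtain ⟨F, hleaf⟩ := hFor S hS hSne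
    have hfacets : facets (gen S) = S := facets_gen hΔ hS
    have hFS : F ∈ S := hfacets ▸ hleaf.1
    have hFfac : F ∈ facets Δ := hS hFS
    have hFΔ : F ∈ Δ := (Finset.mem_filter.1 hFfac).1
    have hFne : F ≠ ∅ := facets_nonempty hΔ hFfac
    rcases hleaf.2 with hone | ⟨G, hGfac, hGF, hjoint⟩
    · -- single facet: S = {F}
      rw [hfacets] at hone
      obtain ⟨w, hw⟩ := Finset.nonempty_iff_ne_empty.2 hFne
      have hsub : ∀ σ ∈ c.support, σ.1 ⊆ F := by
        intro σ hσ
        have := hsupp σ hσ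
        rw [hone, mem_gen] at this
        obtain ⟨F', hF', h1, _⟩ := this
        rw [Finset.mem_singleton] at hF'
        exact hF' ▸ h1
      refine ⟨cone Δ w (j + 1 + 1) c, ?_⟩
      have hh := homotopy hΔ hFΔ hw c hsub
      rw [hcyc, map_zero, add_zero] at hh
      exact hh
    · -- leaf with joint G
      have hGS : G ∈ S := hfacets ▸ hGfac
      set S' := S.erase F with hS'def
      have hS'sub : S' ⊆ facets Δ := (Finset.erase_subset F S).trans hS
      have hS'card : S'.card ≤ m := by
        rw [hS'def, Finset.card_erase_of_mem hFS]
        omega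
      have hGS' : G ∈ S' := Finset.mem_erase.2 ⟨hGF, hGS⟩
      have hGne : G ≠ ∅ := facets_nonempty hΔ (hS hGS)
      set y := c.filter (fun σ => σ.1 ∈ gen S') with hydef
      set x := c.filter (fun σ => ¬ σ.1 ∈ gen S') with hxdef
      have hxy : y + x = c := Finsupp.filter_pos_add_filter_neg c _
      have hxF : ∀ σ ∈ x.support, σ.1 ⊆ F := by
        intro σ hσ
        rw [hxdef, Finsupp.support_filter, Finset.mem_filter] at hσ
        have hg := hsupp σ hσ.1
        rw [mem_gen] at hg
        obtain ⟨H, hHS, hsubH, hneH⟩ := hg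
        by_cases hHF : H = F
        · exact hHF ▸ hsubH
        · exact absurd (mem_gen.2 ⟨H, Finset.mem_erase.2 ⟨hHF, hHS⟩, hsubH, hneH⟩) hσ.2
      have hyS' : ∀ σ ∈ y.support, σ.1 ∈ gen S' := by
        intro σ hσ
        rw [hydef, Finsupp.support_filter, Finset.mem_filter] at hσ
        exact hσ.2
      set z := bd Δ (j + 1) x with hzdef
      have hbdy : bd Δ (j + 1) y + z = 0 := by
        rw [hzdef, ← map_add, hxy, hcyc]
      have hz_sub : ∀ τ ∈ z.support, τ.1 ⊆ F ∧ τ.1 ⊆ G := by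
        intro τ hτ
        have h1 : τ.1 ⊆ F := by
          obtain ⟨σ, hσ, hsub2⟩ := support_bd hτ
          exact hsub2.trans (hxF σ hσ)
        have hzy : z = - bd Δ (j + 1) y := eq_neg_of_add_eq_zero_right hbdy
        have hτy : τ ∈ (bd Δ (j + 1) y).support := by
          have : z.support = (bd Δ (j + 1) y).support := by rw [hzy, Finsupp.support_neg]
          exact this ▸ hτ
        obtain ⟨σ', hσ', hsub'⟩ := support_bd hτy
        have hg := hyS' σ' hσ'
        rw [mem_gen] at hg
        obtain ⟨H, hHS', hsubH, _⟩ := hg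
        have hHmem := Finset.mem_erase.1 hHS'
        have hFH : F ∩ H ⊆ G := hjoint H (hfacets.symm ▸ hHmem.2) hHmem.1
        have h2 : τ.1 ⊆ H := hsub'.trans hsubH
        exact ⟨h1, fun a ha => joint_mem hFH (h1 ha) (h2 ha)⟩
      by_cases hFGne : ∃ w, w ∈ F ∧ w ∈ G
      · obtain ⟨w, hwF, hwG⟩ := hFGne
        have hhomx := homotopy hΔ hFΔ hwF x hxF
        have hzF : ∀ τ ∈ z.support, τ.1 ⊆ F := fun τ hτ => (hz_sub τ hτ).1
        have hhomz := homotopy hΔ hFΔ hwF z hzF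
        rw [hzdef, bd_bd hΔ x, map_zero, add_zero] at hhomz
        set c' := y + cone Δ w (j + 1) z with hc'def
        have hc'supp : ∀ σ ∈ c'.support, σ.1 ∈ gen S' := by
          intro σ hσ
          have := Finsupp.support_add hσ
          rw [Finset.mem_union] at this
          rcases this with h | h
          · exact hyS' σ h
          · obtain ⟨ρ, hρ, hwρ, hins⟩ := support_cone h
            refine mem_gen.2 ⟨G, hGS', ?_, ?_⟩
            · rw [hins]
              exact Finset.insert_subset hwG (hz_sub ρ hρ).2
            · rw [hins]
              exact Finset.insert_ne_empty w ρ.1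
        have hc'cyc : bd Δ (j + 1) c' = 0 := by
          rw [hc'def, map_add, hhomz, hbdy]
        obtain ⟨b', hb'⟩ := ih S' hS'card hS'sub j c' hc'supp hc'cyc
        refine ⟨b' + cone Δ w (j + 1 + 1) x, ?_⟩
        rw [map_add, hb', hc'def]
        have hbcx : bd Δ (j + 1 + 1) (cone Δ w (j + 1 + 1) x) = x - cone Δ w (j + 1) z :=
          eq_sub_of_add_eq hhomx
        rw [hbcx, ← hxy]
        abel
      · have hz0 : z = 0 := by
          by_contra hne
          obtain ⟨τ, hτ⟩ := Finsupp.support_nonempty_iff.2 hne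
          have h1 := hz_sub τ hτ
          have hτne : τ.1.Nonempty := by
            rw [← Finset.card_pos, τ.2.2]
            omega
          obtain ⟨a, ha⟩ := hτne
          exact hFGne ⟨a, h1.1 ha, h1.2 ha⟩
        obtain ⟨w, hw⟩ := Finset.nonempty_iff_ne_empty.2 hFne
        have hhomx := homotopy hΔ hFΔ hw x hxF
        rw [← hzdef, hz0, map_zero, add_zero] at hhomx
        have hycyc : bd Δ (j + 1) y = 0 := by
          have := hbdy
          rw [hz0, add_zero] at this
          exact this
        obtain ⟨b', hb'⟩ := ih S' hS'card hS'sub j y hyS' hycyc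
        refine ⟨b' + cone Δ w (j + 1 + 1) x, ?_⟩
        rw [map_add, hb', hhomx, hxy]

end Forest

/-- All reduced simplicial homology of `Δ` (over `ℤ`) vanishes: the augmentation
`bd Δ 0` is surjective (vanishing of `H̃₋₁`, i.e. nonemptiness) and every cycle is a
boundary in every degree. -/
def AcyclicAll {V : Type} [LinearOrder V] (Δ : Finset (Finset V)) : Prop :=
  Function.Surjective (bd Δ 0) ∧
    ∀ n : ℕ, ∀ c : RChain Δ (n + 1), bd Δ n c = 0 → ∃ b, bd Δ (n + 1) b = c

/-- Every simplicial forest is acyclic in all positive homological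
degrees: for `i ≥ 1` every reduced `i`-cycle is a boundary (only `H̃₀` may fail to
vanish, accounting for disconnectedness). Faces of cardinality `i + 1` have
dimension `i`. -/
theorem forest_acyclic_positive_degrees {V : Type} [LinearOrder V]
    (Δ : Finset (Finset V)) (hΔ : IsComplex Δ) (hF : IsForest Δ) :
    ∀ i : ℕ, 1 ≤ i → ∀ c : RChain Δ (i + 1), bd Δ i c = 0 →
      ∃ b : RChain Δ (i + 2), bd Δ (i + 1) b = c := by
  intro i hi c hcyc
  obtain ⟨j, rfl⟩ : ∃ j, i = j + 1 := ⟨i - 1, by omega⟩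
  refine Forest.key hΔ hF (facets Δ).card (facets Δ) le_rfl (Finset.Subset.refl _) j c ?_ hcyc
  intro σ hσ
  rw [Forest.gen_facets hΔ]
  have hne : σ.1 ≠ ∅ := by
    intro h
    have := σ.2.2
    rw [h, Finset.card_empty] at this
    omega
  exact σ.2.1.resolve_right hne
end
end

section
/- If Δ is a simplicial tree with at least two facets and F is a leaf of Δ with joint G (i.e., F ∩ (Δ \ F) ⊆ G), then Δ collapses to Δ \ F, the subcomplex generated by the remaining facets. -/
noncomputable section
attribute [local instance] Classical.propDecidable

/-- An elementary collapse: remove a pair `{F, F'}` where `F'` is a maximal proper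
face of the facet `F` and `F'` is a face of no other facet. -/
def ElemCollapse {V : Type} (Δ Δ' : Finset (Finset V)) : Prop :=
  ∃ F F', F ∈ facets Δ ∧ F' ∈ Δ ∧ F' ⊆ F ∧ F'.card + 1 = F.card ∧
    (∀ G ∈ facets Δ, F' ⊆ G → G = F) ∧ Δ' = Δ \ {F, F'}

/-- `Δ` collapses to `Δ'` via a finite sequence of elementary collapses. -/
def CollapsesTo {V : Type} (Δ Δ' : Finset (Finset V)) : Prop :=
  Relation.ReflTransGen ElemCollapse Δ Δ'

/-- A complex is collapsible if it collapses to a single point. -/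
def Collapsible {V : Type} (Δ : Finset (Finset V)) : Prop :=
  ∃ v : V, CollapsesTo Δ {{v}}

/-- The full simplex on a finite vertex set `F` : all nonempty subsets of `F`. -/
def fullSimplex {V : Type} (F : Finset V) : Finset (Finset V) :=
  F.powerset.filter (· ≠ ∅)

open Finset

lemma face_le_facet {V : Type} {Δ : Finset (Finset V)} {σ : Finset V} (hσ : σ ∈ Δ) :
    ∃ H ∈ facets Δ, σ ⊆ H := by
  obtain ⟨H, hH, hmax⟩ := Finset.exists_maximal (s := Δ.filter (σ ⊆ ·))
    ⟨σ, by simp [hσ]⟩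
  simp only [mem_filter] at hH
  refine ⟨H, ?_, hH.2⟩
  simp only [facets, mem_filter]
  refine ⟨hH.1, fun K hK hHK => ?_⟩
  by_contra hne
  exact hne (le_antisymm hHK (hmax (by simp [hK, hH.2.trans hHK]) hHK))

lemma collapse_pairs {V : Type}
    (Δ : Finset (Finset V)) (hΔ : IsComplex Δ)
    (F : Finset V) (hFΔ : F ∈ Δ)
    (B : Finset V)
    (a : V) (haF : a ∈ F) (haB : a ∉ B)
    (hsub : ∀ ρ ∈ Δ, ∀ σ, σ ⊆ ρ → σ ⊆ F → (σ ∩ B).Nonempty → ρ ⊆ F)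
    (Q : Finset (Finset V))
    (hQS : ∀ σ ∈ Q, σ ⊆ F ∧ (σ ∩ B).Nonempty ∧ a ∉ σ)
    (hdc : ∀ σ ∈ Q, ∀ σ', σ' ⊆ F → (σ' ∩ B).Nonempty → a ∉ σ' → σ.card < σ'.card → σ' ∈ Q) :
    CollapsesTo Δ (Δ \ Q.biUnion (fun σ => {insert a σ, σ})) := by
  classical
  induction Q using Finset.strongInduction with
  | _ Q IH =>
  rcases Q.eq_empty_or_nonempty with rfl | hne
  · simp only [Finset.biUnion_empty, Finset.sdiff_empty]
    exact Relation.ReflTransGen.refl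
  obtain ⟨σ, hσQ, hmin⟩ := Finset.exists_min_image Q Finset.card hne
  obtain ⟨hσF, hσB, haσ⟩ := hQS σ hσQ
  set Q' : Finset (Finset V) := Q.erase σ with hQ'
  have hQ'sub : Q' ⊂ Q := Finset.erase_ssubset hσQ
  have hQ'S : ∀ τ ∈ Q', τ ⊆ F ∧ (τ ∩ B).Nonempty ∧ a ∉ τ :=
    fun τ hτ => hQS τ (Finset.mem_of_mem_erase hτ)
  have hQ'dc : ∀ τ ∈ Q', ∀ τ', τ' ⊆ F → (τ' ∩ B).Nonempty → a ∉ τ' → τ.card < τ'.card → τ' ∈ Q' := by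
    intro τ hτ τ' h1 h2 h3 h4
    have hτQ := Finset.mem_of_mem_erase hτ
    have : τ' ∈ Q := hdc τ hτQ τ' h1 h2 h3 h4
    refine Finset.mem_erase.2 ⟨?_, this⟩
    intro h; subst h
    exact absurd h4 (not_lt.2 (hmin τ hτQ))
  have step1 : CollapsesTo Δ (Δ \ Q'.biUnion (fun σ => {insert a σ, σ})) :=
    IH Q' hQ'sub hQ'S hQ'dc
  set Δ₁ : Finset (Finset V) := Δ \ Q'.biUnion (fun σ => {insert a σ, σ}) with hΔ₁
  -- basic facts
  have hσne : σ ≠ ∅ := by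
    rintro rfl; simp at hσB
  have hσΔ : σ ∈ Δ := hΔ.2 F hFΔ σ hσF hσne
  have hiσF : insert a σ ⊆ F := Finset.insert_subset haF hσF
  have hiσΔ : insert a σ ∈ Δ := hΔ.2 F hFΔ _ hiσF (by simp)
  -- any face of Δ containing σ, other than σ and insert a σ, is in pairs Q'
  have key : ∀ ρ ∈ Δ, σ ⊆ ρ → ρ ≠ σ → ρ ≠ insert a σ →
      ρ ∈ Q'.biUnion (fun τ => ({insert a τ, τ} : Finset (Finset V))) := by
    intro ρ hρΔ hσρ hρ1 hρ2
    have hρF : ρ ⊆ F := hsub ρ hρΔ σ hσρ hσF hσB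
    by_cases haρ : a ∈ ρ
    · set τ : Finset V := ρ.erase a with hτdef
      have hρτ : ρ = insert a τ := by
        rw [hτdef, Finset.insert_erase haρ]
      have hστ : σ ⊆ τ := fun x hx => Finset.mem_erase.2 ⟨fun h => haσ (h ▸ hx), hσρ hx⟩
      have hτne : τ ≠ σ := by rintro rfl; exact hρ2 hρτ
      have hτcard : σ.card < τ.card := Finset.card_lt_card (lt_of_le_of_ne hστ (Ne.symm hτne))
      have hτF : τ ⊆ F := (Finset.erase_subset a ρ).trans hρF
      have hτB : (τ ∩ B).Nonempty := hσB.mono (Finset.inter_subset_inter hστ le_rfl)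
      have hτQ : τ ∈ Q := hdc σ hσQ τ hτF hτB (Finset.notMem_erase a ρ) hτcard
      have hτQ' : τ ∈ Q' := Finset.mem_erase.2 ⟨hτne, hτQ⟩
      exact Finset.mem_biUnion.2 ⟨τ, hτQ', by simp [hρτ]⟩
    · have hρcard : σ.card < ρ.card := Finset.card_lt_card (lt_of_le_of_ne hσρ (Ne.symm hρ1))
      have hρB : (ρ ∩ B).Nonempty := hσB.mono (Finset.inter_subset_inter hσρ le_rfl)
      have hρQ : ρ ∈ Q := hdc σ hσQ ρ hρF hρB haρ hρcard
      have hρQ' : ρ ∈ Q' := Finset.mem_erase.2 ⟨hρ1, hρQ⟩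
      exact Finset.mem_biUnion.2 ⟨ρ, hρQ', by simp⟩
  -- σ and insert a σ are still in Δ₁
  have hσΔ₁ : σ ∈ Δ₁ := by
    rw [hΔ₁, Finset.mem_sdiff]
    refine ⟨hσΔ, fun h => ?_⟩
    obtain ⟨τ, hτQ', hτmem⟩ := Finset.mem_biUnion.1 h
    obtain ⟨hτne, hτQ⟩ := Finset.mem_erase.1 hτQ'
    obtain ⟨_, _, haτ⟩ := hQS τ hτQ
    simp only [Finset.mem_insert, Finset.mem_singleton] at hτmem
    rcases hτmem with h | h
    · exact haσ (h ▸ Finset.mem_insert_self a τ)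
    · exact hτne h.symm
  have hiσΔ₁ : insert a σ ∈ Δ₁ := by
    rw [hΔ₁, Finset.mem_sdiff]
    refine ⟨hiσΔ, fun h => ?_⟩
    obtain ⟨τ, hτQ', hτmem⟩ := Finset.mem_biUnion.1 h
    obtain ⟨hτne, hτQ⟩ := Finset.mem_erase.1 hτQ'
    obtain ⟨_, hτB, haτ⟩ := hQS τ hτQ
    simp only [Finset.mem_insert, Finset.mem_singleton] at hτmem
    rcases hτmem with h | h
    · refine hτne ?_
      have := congrArg (Finset.erase · a) h
      simp only [Finset.erase_insert haσ, Finset.erase_insert haτ] at this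
      exact this.symm
    · exact haτ (h ▸ Finset.mem_insert_self a σ)
  have hΔ₁sub : Δ₁ ⊆ Δ := Finset.sdiff_subset
  -- insert a σ is a facet of Δ₁
  have hfac : insert a σ ∈ facets Δ₁ := by
    simp only [facets, mem_filter]
    refine ⟨hiσΔ₁, fun ρ hρΔ₁ hsub' => ?_⟩
    by_contra hne'
    have hρΔ : ρ ∈ Δ := hΔ₁sub hρΔ₁
    have hσρ : σ ⊆ ρ := (Finset.subset_insert a σ).trans hsub'
    have hρσ : ρ ≠ σ := fun h => haσ (h ▸ hsub' (Finset.mem_insert_self a σ))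
    have := key ρ hρΔ hσρ hρσ (Ne.symm hne')
    rw [hΔ₁, Finset.mem_sdiff] at hρΔ₁
    exact hρΔ₁.2 this
  -- σ is free in Δ₁
  have hfree : ∀ K ∈ facets Δ₁, σ ⊆ K → K = insert a σ := by
    intro K hK hσK
    simp only [facets, mem_filter] at hK
    obtain ⟨hKΔ₁, hKmax⟩ := hK
    by_cases hKσ : K = σ
    · subst hKσ
      exact hKmax (insert a K) hiσΔ₁ (Finset.subset_insert a K)
    by_contra hne'
    have := key K (hΔ₁sub hKΔ₁) hσK hKσ hne'
    rw [hΔ₁, Finset.mem_sdiff] at hKΔ₁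
    exact hKΔ₁.2 this
  -- the elementary collapse step
  refine step1.tail ⟨insert a σ, σ, hfac, hσΔ₁, Finset.subset_insert a σ, ?_, hfree, ?_⟩
  · rw [Finset.card_insert_of_notMem haσ]
  · have hQins : Q = insert σ Q' := (Finset.insert_erase hσQ).symm
    rw [hQins, Finset.biUnion_insert, hΔ₁]
    ext ρ
    simp only [Finset.mem_sdiff, Finset.mem_union, Finset.mem_insert, Finset.mem_singleton]
    tauto

/-- If `Δ` is a simplicial tree with at least two facets and `F` is a
leaf of `Δ` with joint `G` (i.e. `F ∩ (Δ ∖ F) ⊆ G`), then `Δ` collapses to the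
subcomplex `Δ ∖ F` generated by the remaining facets. -/
theorem tree_collapses_to_remove_leaf {V : Type} (Δ : Finset (Finset V))
    (hΔ : IsComplex Δ) (hT : IsTree Δ) (h2 : 2 ≤ (facets Δ).card)
    (F G : Finset V) (hF : F ∈ facets Δ) (hG : G ∈ facets Δ) (hGF : G ≠ F)
    (hjoint : ∀ H ∈ facets Δ, H ≠ F → F ∩ H ⊆ G) :
    CollapsesTo Δ (gen (facets Δ \ {F})) := by
  classical
  have hFΔ : F ∈ Δ := (Finset.mem_filter.1 hF).1
  have hGΔ : G ∈ Δ := (Finset.mem_filter.1 hG).1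
  have hFmax : ∀ K ∈ Δ, F ⊆ K → F = K := (Finset.mem_filter.1 hF).2
  have hFne : F ≠ ∅ := by rintro rfl; exact hΔ.1 hFΔ
  have hGne : G ≠ ∅ := by rintro rfl; exact hΔ.1 hGΔ
  have hnFG : ¬ F ⊆ G := fun h => hGF ((hFmax G hGΔ h).symm)
  -- every face meeting F \ G, contained in F, forces its supersets into F
  have hsub : ∀ ρ ∈ Δ, ∀ σ, σ ⊆ ρ → σ ⊆ F → (σ ∩ (F \ G)).Nonempty → ρ ⊆ F := by
    intro ρ hρ σ hσρ hσF hσB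
    obtain ⟨H, hHfac, hρH⟩ := face_le_facet hρ
    by_cases hHF : H = F
    · exact hHF ▸ hρH
    · exfalso
      obtain ⟨x, hx⟩ := hσB
      rw [Finset.mem_inter, Finset.mem_sdiff] at hx
      exact hx.2.2 (hjoint H hHfac hHF (Finset.mem_inter.2 ⟨hx.2.1, hρH (hσρ hx.1)⟩))
  -- connectivity gives a vertex in F ∩ G
  have hA : (F ∩ G).Nonempty := by
    by_contra hA
    rw [Finset.not_nonempty_iff_eq_empty] at hA
    have hfaceF : ∀ σ ∈ Δ, (σ ∩ F).Nonempty → σ ⊆ F := by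
      intro σ hσ hσF
      obtain ⟨H, hHfac, hσH⟩ := face_le_facet hσ
      by_cases hHF : H = F
      · exact hHF ▸ hσH
      · exfalso
        obtain ⟨x, hx⟩ := Finset.mem_inter.1 hσF.choose_spec
        have hxG : hσF.choose ∈ G := hjoint H hHfac hHF
          (Finset.mem_inter.2 ⟨hx, hσH (Finset.mem_inter.1 hσF.choose_spec).1⟩)
        have : hσF.choose ∈ F ∩ G := Finset.mem_inter.2 ⟨hx, hxG⟩
        rw [hA] at this; exact absurd this (Finset.notMem_empty _)
    obtain ⟨u, hu⟩ := Finset.nonempty_iff_ne_empty.2 hFne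
    obtain ⟨v, hv⟩ := Finset.nonempty_iff_ne_empty.2 hGne
    have huV : u ∈ vtx Δ := Finset.mem_sup.2 ⟨F, hFΔ, hu⟩
    have hvV : v ∈ vtx Δ := Finset.mem_sup.2 ⟨G, hGΔ, hv⟩
    have hchain := hT.1.2 u huV v hvV
    have hvF : v ∈ F := by
      clear hvV hv
      induction hchain with
      | refl => exact hu
      | tail _ hstep ih =>
        obtain ⟨σ, hσΔ, hbσ, hcσ⟩ := hstep
        exact hfaceF σ hσΔ ⟨_, Finset.mem_inter.2 ⟨hbσ, ih⟩⟩ hcσ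
    have : v ∈ F ∩ G := Finset.mem_inter.2 ⟨hvF, hv⟩
    rw [hA] at this; exact absurd this (Finset.notMem_empty _)
  obtain ⟨a, haFG⟩ := hA
  have haF : a ∈ F := (Finset.mem_inter.1 haFG).1
  have haG : a ∈ G := (Finset.mem_inter.1 haFG).2
  have haB : a ∉ F \ G := fun h => (Finset.mem_sdiff.1 h).2 haG
  set S : Finset (Finset V) :=
    F.powerset.filter (fun σ => (σ ∩ (F \ G)).Nonempty ∧ a ∉ σ) with hS
  have hmemS : ∀ σ, σ ∈ S ↔ σ ⊆ F ∧ (σ ∩ (F \ G)).Nonempty ∧ a ∉ σ := by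
    intro σ; rw [hS]; simp [Finset.mem_filter, Finset.mem_powerset, and_assoc]
  have hcoll := collapse_pairs Δ hΔ F hFΔ (F \ G) a haF haB hsub S
    (fun σ hσ => (hmemS σ).1 hσ)
    (fun σ _ σ' h1 h2 h3 _ => (hmemS σ').2 ⟨h1, h2, h3⟩)
  -- characterize membership in the union of pairs
  have hP : ∀ ρ, ρ ∈ S.biUnion (fun σ => ({insert a σ, σ} : Finset (Finset V))) ↔
      (ρ ⊆ F ∧ (ρ ∩ (F \ G)).Nonempty) := by
    intro ρ
    constructor
    · intro h
      obtain ⟨σ, hσS, hmem⟩ := Finset.mem_biUnion.1 h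
      obtain ⟨h1, h2, h3⟩ := (hmemS σ).1 hσS
      simp only [Finset.mem_insert, Finset.mem_singleton] at hmem
      rcases hmem with rfl | rfl
      · exact ⟨Finset.insert_subset haF h1,
          h2.mono (Finset.inter_subset_inter (Finset.subset_insert a σ) le_rfl)⟩
      · exact ⟨h1, h2⟩
    · rintro ⟨h1, h2⟩
      by_cases haρ : a ∈ ρ
      · refine Finset.mem_biUnion.2 ⟨ρ.erase a, (hmemS _).2 ⟨(Finset.erase_subset a ρ).trans h1, ?_, Finset.notMem_erase a ρ⟩, ?_⟩
        · obtain ⟨x, hx⟩ := h2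
          rw [Finset.mem_inter] at hx
          exact ⟨x, Finset.mem_inter.2 ⟨Finset.mem_erase.2 ⟨fun h => haB (h ▸ hx.2), hx.1⟩, hx.2⟩⟩
        · simp [Finset.insert_erase haρ]
      · exact Finset.mem_biUnion.2 ⟨ρ, (hmemS ρ).2 ⟨h1, h2, haρ⟩, by simp⟩
  -- the target equality
  have hgen : ∀ ρ, ρ ∈ gen (facets Δ \ {F}) ↔
      ∃ H, (H ∈ facets Δ ∧ H ≠ F) ∧ ρ ⊆ H ∧ ρ ≠ ∅ := by
    intro ρ
    simp [gen, Finset.mem_biUnion, Finset.mem_sdiff, Finset.mem_filter,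
      Finset.mem_powerset, and_assoc]
  have hEq : Δ \ S.biUnion (fun σ => ({insert a σ, σ} : Finset (Finset V)))
      = gen (facets Δ \ {F}) := by
    ext ρ
    rw [Finset.mem_sdiff, hP, hgen]
    constructor
    · rintro ⟨hρΔ, hnp⟩
      have hρne : ρ ≠ ∅ := by rintro rfl; exact hΔ.1 hρΔ
      by_cases hρF : ρ ⊆ F
      · have hρG : ρ ⊆ G := by
          intro x hx
          by_contra hxG
          exact hnp ⟨hρF, ⟨x, Finset.mem_inter.2 ⟨hx, Finset.mem_sdiff.2 ⟨hρF hx, hxG⟩⟩⟩⟩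
        exact ⟨G, ⟨hG, hGF⟩, hρG, hρne⟩
      · obtain ⟨H, hHfac, hρH⟩ := face_le_facet hρΔ
        exact ⟨H, ⟨hHfac, fun h => hρF (h ▸ hρH)⟩, hρH, hρne⟩
    · rintro ⟨H, ⟨hHfac, hHF⟩, hρH, hρne⟩
      have hHΔ : H ∈ Δ := (Finset.mem_filter.1 hHfac).1
      refine ⟨hΔ.2 H hHΔ ρ hρH hρne, ?_⟩
      rintro ⟨hρF, hx⟩
      obtain ⟨x, hx'⟩ := hx
      rw [Finset.mem_inter, Finset.mem_sdiff] at hx'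
      exact hx'.2.2 (hjoint H hHfac hHF (Finset.mem_inter.2 ⟨hx'.2.1, hρH hx'.1⟩))
  rw [← hEq]
  exact hcoll
end
end

section
/- Let Δ be a simplicial complex on vertices 1,…,n that is not the boundary of the (n−1)-simplex, with variables x_σ for faces σ ∈ Δ, and let m'_v be the squarefree product of: x_{G∖{v}} over facets G containing v, x_F over facets F not containing v, and x_σ over maximal proper faces σ of facets F not containing v. Then the ideal J'_Δ = (m'_1,…,m'_n) has no redundant generators: m'_i does not divide m'_j for i ≠ j. -/
noncomputable section
attribute [local instance] Classical.propDecidable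

/-! Monomials in the variables `x_σ`, indexed by the nonempty faces `σ` of a complex
`Δ`.  All monomials arising in the Peeva–Velasco construction and its refinement are
squarefree, so we represent a squarefree monomial by its finite set of variables
(a `Finset` of faces); then divisibility is `⊆`, lcm is `∪`, and a product of
monomials with disjoint supports is `∪`. -/

/-- The Peeva–Velasco generator `m_v = ∏_{σ ∈ Δ, v ∉ σ} x_σ`. -/
def mPV {V : Type} (Δ : Finset (Finset V)) (v : V) : Finset (Finset V) :=
  Δ.filter fun σ => v ∉ σ

/-- `A_Δ(v)`: the facets of `Δ` not containing `v`. -/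
def AF {V : Type} (Δ : Finset (Finset V)) (v : V) : Finset (Finset V) :=
  (facets Δ).filter fun F => v ∉ F

/-- `B_Δ(v)`: the facets of `Δ` containing `v`. -/
def BF {V : Type} (Δ : Finset (Finset V)) (v : V) : Finset (Finset V) :=
  (facets Δ).filter fun F => v ∈ F

/-- The refined generator `m'_v`: the squarefree product of the variables
`x_{G∖{v}}` for facets `G ∋ v`, the variables `x_F` for facets `F ∌ v`, and the
variables `x_σ` for maximal proper (nonempty) faces `σ` of such facets `F`. -/
def mPV' {V : Type} (Δ : Finset (Finset V)) (v : V) : Finset (Finset V) :=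
  ((BF Δ v).image (fun G => G.erase v)).filter (· ≠ ∅) ∪ AF Δ v ∪
    (AF Δ v).biUnion fun F => F.powerset.filter fun σ => σ.card + 1 = F.card ∧ σ ≠ ∅

/-- `Δ` is the boundary of the full simplex on its `n` vertices: all proper
nonempty subsets of the vertex set. -/
def IsBoundaryOfFullSimplex {n : ℕ} (Δ : Finset (Finset (Fin n))) : Prop :=
  Δ = (Finset.univ : Finset (Fin n)).powerset.filter
        fun s => s ≠ ∅ ∧ s ≠ Finset.univ

/-- For a simplicial complex `Δ` on vertices `1, …, n`, not the
boundary of the `(n-1)`-simplex, and in which every vertex lies in some face, the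
ideal `J'_Δ = (m'_1, …, m'_n)` has no redundant generators: `m'_i ∤ m'_j` for
`i ≠ j` (for squarefree monomials, divisibility is containment of supports). -/
theorem mPV'_no_redundant_generators {n : ℕ} (Δ : Finset (Finset (Fin n)))
    (hΔ : IsComplex Δ) (hvtx : ∀ v : Fin n, ({v} : Finset (Fin n)) ∈ Δ)
    (hnb : ¬ IsBoundaryOfFullSimplex Δ) :
    ∀ i j : Fin n, i ≠ j → ¬ mPV' Δ i ⊆ mPV' Δ j := by
  intro i j hij hsub
  -- there is a facet containing j
  obtain ⟨G, hGf, hjG⟩ : ∃ G ∈ facets Δ, j ∈ G := by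
    have h1 : ({j} : Finset (Fin n)) ∈ Δ.filter (fun F => j ∈ F) := by
      simp [hvtx j]
    obtain ⟨G, hG, hmax⟩ : ∃ m ∈ Δ.filter (fun F => j ∈ F), ∀ x ∈ Δ.filter (fun F => j ∈ F), ¬ m < x := by
      obtain ⟨m, hm⟩ := Finset.exists_maximal ⟨_, h1⟩
      exact ⟨m, hm.1, fun x hx hlt => lt_irrefl _ (lt_of_lt_of_le hlt (hm.2 hx hlt.le))⟩
    simp only [Finset.mem_filter] at hG
    refine ⟨G, ?_, hG.2⟩
    simp only [facets, Finset.mem_filter]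
    refine ⟨hG.1, fun H hH hGH => ?_⟩
    by_contra hne
    exact hmax H (Finset.mem_filter.2 ⟨hH, hGH hG.2⟩) (lt_of_le_of_ne hGH hne)
  -- an element of mPV' Δ i containing j
  have hel : ∃ σ ∈ mPV' Δ i, j ∈ σ := by
    by_cases hiG : i ∈ G
    · refine ⟨G.erase i, ?_, Finset.mem_erase.2 ⟨hij.symm, hjG⟩⟩
      simp only [mPV', BF, Finset.mem_union, Finset.mem_filter, Finset.mem_image]
      exact Or.inl (Or.inl ⟨⟨G, ⟨hGf, hiG⟩, by ext a; simp [Finset.mem_erase]⟩,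
        Finset.ne_empty_of_mem (Finset.mem_erase.2 ⟨hij.symm, hjG⟩)⟩)
    · refine ⟨G, ?_, hjG⟩
      simp only [mPV', AF, Finset.mem_union, Finset.mem_filter]
      exact Or.inl (Or.inr ⟨hGf, hiG⟩)
  obtain ⟨σ, hσ, hjσ⟩ := hel
  have hmem := hsub hσ
  -- but every element of mPV' Δ j omits j
  simp only [mPV', AF, BF, Finset.mem_union, Finset.mem_filter, Finset.mem_image,
    Finset.mem_biUnion, Finset.mem_powerset] at hmem
  rcases hmem with (⟨⟨H, -, rfl⟩, -⟩ | ⟨-, h⟩) | ⟨F, ⟨-, hjF⟩, hσF, -⟩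
  · simp [Finset.mem_erase] at hjσ
  · exact h hjσ
  · exact hjF (hσF hjσ)
end
end

section
/- Let Δ be a simplicial complex on n vertices, not the boundary of a simplex, with m_v, m'_v as in the Peeva–Velasco construction and its refinement, and write m_v = m''_v · m'_v. For monomials h_v dividing m''_v, the ideal I = (h_1 m'_1,…,h_n m'_n) has no redundant generators: h_i m'_i does not divide h_j m'_j for i ≠ j. -/
noncomputable section
attribute [local instance] Classical.propDecidable

lemma mPV'_not_mem {V : Type} (Δ : Finset (Finset V)) (v : V) (σ : Finset V)
    (hσ : σ ∈ mPV' Δ v) : v ∉ σ := by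
  simp only [mPV', Finset.mem_union, Finset.mem_filter, Finset.mem_image,
    Finset.mem_biUnion, AF, BF, Finset.mem_powerset] at hσ
  rcases hσ with (⟨⟨G, _, rfl⟩, _⟩ | ⟨_, hv⟩) | ⟨F, ⟨_, hvF⟩, hσF, _⟩
  · exact Finset.notMem_erase v G
  · exact hv
  · exact fun hv => hvF (hσF hv)

lemma mPV_not_mem {V : Type} (Δ : Finset (Finset V)) (v : V) (σ : Finset V)
    (hσ : σ ∈ mPV Δ v) : v ∉ σ := (Finset.mem_filter.mp hσ).2

lemma mPV'_exists {V : Type} (Δ : Finset (Finset V)) (v w : V) (F : Finset V)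
    (hF : F ∈ facets Δ) (hw : w ∈ F) (hwv : w ≠ v) :
    ∃ σ ∈ mPV' Δ v, w ∈ σ := by
  by_cases hvF : v ∈ F
  · have hB : F ∈ BF Δ v := Finset.mem_filter.mpr ⟨hF, hvF⟩
    have hmem : w ∈ F.erase v := Finset.mem_erase.mpr ⟨hwv, hw⟩
    refine ⟨F.erase v, ?_, hmem⟩
    exact Finset.mem_union_left _ (Finset.mem_union_left _
      (Finset.mem_filter.mpr ⟨Finset.mem_image_of_mem _ hB, Finset.ne_empty_of_mem hmem⟩))
  · exact ⟨F, Finset.mem_union_left _ (Finset.mem_union_right _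
      (Finset.mem_filter.mpr ⟨hF, hvF⟩)), hw⟩

/-- With `m_v = m''_v · m'_v` (so `m''_v` is the squarefree
monomial with support `mPV Δ v \ mPV' Δ v`), for any choice of squarefree monomials
`h_v ∣ m''_v` the ideal `I = (h_1 m'_1, …, h_n m'_n)` has no redundant generators:
`h_i m'_i ∤ h_j m'_j` for `i ≠ j`.  (Products of squarefree monomials with disjoint
supports correspond to unions of supports and divisibility to containment.) -/
theorem scaled_generators_no_redundant {n : ℕ} (Δ : Finset (Finset (Fin n)))
    (hΔ : IsComplex Δ) (hvtx : ∀ v : Fin n, ({v} : Finset (Fin n)) ∈ Δ)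
    (hnb : ¬ IsBoundaryOfFullSimplex Δ)
    (h : Fin n → Finset (Finset (Fin n)))
    (hh : ∀ v : Fin n, h v ⊆ mPV Δ v \ mPV' Δ v) :
    ∀ i j : Fin n, i ≠ j → ¬ (h i ∪ mPV' Δ i) ⊆ (h j ∪ mPV' Δ j) := by
  intro i j hij hsub
  obtain ⟨F, hF, hjF⟩ : ∃ F ∈ facets Δ, j ∈ F := by
    have h1 : ({j} : Finset (Fin n)) ∈ Δ.filter (fun F => j ∈ F) := by
      simp [hvtx j]
    obtain ⟨F, hFm⟩ := Finset.exists_maximal ⟨_, h1⟩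
    have hF : F ∈ Δ.filter (fun F => j ∈ F) := hFm.prop
    have hmax : ∀ x ∈ Δ.filter (fun F => j ∈ F), ¬ F < x :=
      fun x hx hlt => hlt.ne (le_antisymm hlt.le (hFm.le_of_ge hx hlt.le))
    simp only [Finset.mem_filter] at hF
    refine ⟨F, ?_, hF.2⟩
    simp only [facets, Finset.mem_filter]
    refine ⟨hF.1, fun G hG hFG => ?_⟩
    by_contra hne
    exact hmax G (Finset.mem_filter.mpr ⟨hG, hFG hF.2⟩) (lt_of_le_of_ne hFG hne)
  obtain ⟨σ, hσi, hjσ⟩ := mPV'_exists Δ i j F hF hjF hij.symm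
  have hσj := hsub (Finset.mem_union_right _ hσi)
  rcases Finset.mem_union.mp hσj with h1 | h2
  · exact mPV_not_mem Δ j σ (Finset.mem_sdiff.mp (hh j h1)).1 hjσ
  · exact mPV'_not_mem Δ j σ h2 hjσ
end
end
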